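/- arXiv:1909.00468 — 2 statements merged into one kernel-verified Lean document; each statement's English description precedes it below -/
import Mathlib

section
/- If V : ℝ → ℝ is continuous with compact support and ∫_ℝ V dx = 0, then ∬_{ℝ²} V(x)|x−y|V(y) dx dy = −2 ∫_ℝ (∫_{-∞}^x V(y) dy)² dx. -/
open MeasureTheory Set

/-- For continuous compactly supported `V` of zero mean,
`∬ V(x)|x - y|V(y) dx dy = -2 ∫ (∫_{-∞}^x V)² dx`. -/
theorem double_integral_abs_eq (V : ℝ → ℝ)
    (hV : Continuous V) (hsupp : HasCompactSupport V)
    (hmean : (∫ x : ℝ, V x) = 0) :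
    (∫ x : ℝ, ∫ y : ℝ, V x * |x - y| * V y) =
      -2 * ∫ x : ℝ, (∫ y in Set.Iic x, V y) ^ 2 := by
  have hVi : Integrable V := hV.integrable_of_hasCompactSupport hsupp
  obtain ⟨r, hr⟩ := hsupp.isBounded.subset_closedBall 0
  have hsub : tsupport V ⊆ Icc (-r) r := by
    simpa [Real.closedBall_eq_Icc, zero_sub, zero_add] using hr
  obtain ⟨C, hC⟩ := hsupp.exists_bound_of_continuous hV
  have hV0 : ∀ x, x ∉ Icc (-r) r → V x = 0 := fun x hx =>
    image_eq_zero_of_notMem_tsupport (fun h => hx (hsub h))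
  set W : ℝ → ℝ := fun t => ∫ y in Iic t, V y with hWdef
  have hWlow : ∀ t, t < -r → W t = 0 := by
    intro t ht
    apply setIntegral_eq_zero_of_forall_eq_zero
    intro x hx
    apply hV0
    intro h
    have h1 := h.1
    have h2 : x ≤ t := hx
    linarith
  have hWhigh : ∀ t, r < t → W t = 0 := by
    intro t ht
    have h1 : (∫ y in Iic t, V y) + ∫ y in Ioi t, V y = ∫ y, V y :=
      intervalIntegral.integral_Iic_add_Ioi hVi.integrableOn hVi.integrableOn
    have h2 : (∫ y in Ioi t, V y) = 0 := by
      apply setIntegral_eq_zero_of_forall_eq_zero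
      intro x hx
      apply hV0
      intro h
      have := h.2
      have h2 : t < x := hx
      linarith
    simp only [hWdef]
    rw [hmean, h2] at h1
    linarith
  have hWsupp : HasCompactSupport W := by
    apply HasCompactSupport.intro (isCompact_Icc (a := -r) (b := r))
    intro t ht
    simp only [mem_Icc, not_and_or, not_le] at ht
    rcases ht with h | h
    · exact hWlow t (by linarith)
    · exact hWhigh t h
  have hWeq : ∀ t, W t = ∫ y in (-r-1)..t, V y := by
    intro t
    have h0 : (∫ x in Iic (-r-1), V x) = 0 := hWlow _ (by linarith)
    have h := intervalIntegral.integral_Iic_sub_Iic (hVi.integrableOn (s := Iic (-r-1)))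
      (hVi.integrableOn (s := Iic t))
    rw [h0, sub_zero] at h
    exact h
  have hWcont : Continuous W := by
    have heq : W = fun t => ∫ y in (-r-1)..t, V y := funext hWeq
    rw [heq]
    exact hVi.continuous_primitive _
  have hWi : Integrable W := hWcont.integrable_of_hasCompactSupport hWsupp
  obtain ⟨C', hC'⟩ := hWsupp.exists_bound_of_continuous hWcont
  -- Ioi integral is -W
  have hIoi : ∀ t, (∫ y in Ioi t, V y) = -W t := by
    intro t
    have h1 : W t + ∫ y in Ioi t, V y = ∫ y, V y :=
      intervalIntegral.integral_Iic_add_Ioi hVi.integrableOn hVi.integrableOn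
    rw [hmean] at h1; linarith
  -- Step B
  have stepB : ∀ x : ℝ, (∫ y, V y * max (y - x) 0) = ∫ t in Ici x, (-W t) := by
    intro x
    set f : ℝ → ℝ → ℝ := fun y t => V y * indicator (Ico x y) (fun _ => (1:ℝ)) t with hfdef
    have hfB1 : ∀ y, (∫ t, f y t) = V y * max (y - x) 0 := by
      intro y
      simp only [hfdef]
      rw [integral_const_mul, integral_indicator_const _ measurableSet_Ico]
      simp [Real.volume_Ico, ENNReal.toReal_ofReal']
    have hS : MeasurableSet {p : ℝ × ℝ | x ≤ p.2 ∧ p.2 < p.1} :=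
      (measurableSet_le measurable_const measurable_snd).inter
        (measurableSet_lt measurable_snd measurable_fst)
    have hfu : Function.uncurry f = fun p : ℝ × ℝ =>
        V p.1 * indicator {p : ℝ × ℝ | x ≤ p.2 ∧ p.2 < p.1} (fun _ => (1:ℝ)) p := by
      funext p
      by_cases h : x ≤ p.2 ∧ p.2 < p.1 <;>
        simp [Function.uncurry, hfdef, Set.indicator, Set.mem_Ico, h]
    have hfmeas : AEStronglyMeasurable (Function.uncurry f) (volume.prod volume) := by
      rw [hfu]
      exact ((hV.comp continuous_fst).aestronglyMeasurable.mul
        (measurable_const.indicator hS).aestronglyMeasurable)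
    have hfint : Integrable (Function.uncurry f) (volume.prod volume) := by
      have hbox : MeasurableSet (Icc (-r) r ×ˢ Icc x r) :=
        measurableSet_Icc.prod measurableSet_Icc
      have hgint : Integrable ((Icc (-r) r ×ˢ Icc x r).indicator fun _ => C)
          (volume.prod volume) := by
        rw [integrable_indicator_iff hbox]
        refine integrableOn_const ?_ (by simp)
        rw [Measure.prod_prod, Real.volume_Icc, Real.volume_Icc]
        exact (ENNReal.mul_lt_top ENNReal.ofReal_lt_top ENNReal.ofReal_lt_top).ne
      apply hgint.mono' hfmeas
      apply ae_of_all
      rintro ⟨y, t⟩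
      have hind : |indicator (Ico x y) (fun _ => (1:ℝ)) t| ≤ 1 := by
        by_cases h : t ∈ Ico x y <;> simp [h]
      by_cases hmem : (y, t) ∈ Icc (-r) r ×ˢ Icc x r
      · rw [indicator_of_mem hmem]
        calc ‖Function.uncurry f (y, t)‖
            = |V y| * |indicator (Ico x y) (fun _ => (1:ℝ)) t| := by
              simp [Function.uncurry, hfdef, abs_mul]
          _ ≤ C * 1 := mul_le_mul (hC y) hind (abs_nonneg _) ((abs_nonneg _).trans (hC y))
          _ = C := mul_one C
      · rw [indicator_of_notMem hmem]
        have : Function.uncurry f (y, t) = 0 := by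
          simp only [Function.uncurry, hfdef]
          by_cases ht : t ∈ Ico x y
          · have hy0 : V y = 0 := by
              apply hV0
              intro hyIcc
              exact hmem (Set.mk_mem_prod hyIcc ⟨ht.1, ht.2.le.trans hyIcc.2⟩)
            simp [hy0]
          · simp [indicator_of_notMem ht]
        rw [this]
        simp
    have hfB2 : ∀ t, (∫ y, f y t) = indicator (Ici x) (fun t => -W t) t := by
      intro t
      by_cases h : x ≤ t
      · have heq : (fun y => f y t) = fun y => (Ioi t).indicator V y := by
          funext y
          by_cases hy : t < y
          · simp [hfdef, Set.indicator, Set.mem_Ico, Set.mem_Ioi, h, hy]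
          · simp [hfdef, Set.indicator, Set.mem_Ico, Set.mem_Ioi, h, hy]
        rw [heq, integral_indicator measurableSet_Ioi, hIoi t, indicator_of_mem (mem_Ici.2 h)]
      · have heq : (fun y => f y t) = fun _ => (0:ℝ) := by
          funext y
          simp [hfdef, Set.indicator, Set.mem_Ico, h]
        rw [heq, indicator_of_notMem (fun hh => h (mem_Ici.1 hh))]
        simp
    calc (∫ y, V y * max (y - x) 0) = ∫ y, ∫ t, f y t := by
          congr 1; funext y; exact (hfB1 y).symm
      _ = ∫ t, ∫ y, f y t := integral_integral_swap hfint
      _ = ∫ t, indicator (Ici x) (fun t => -W t) t := by congr 1; funext t; exact hfB2 t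
      _ = ∫ t in Ici x, (-W t) := integral_indicator measurableSet_Ici
  -- Step C
  have stepC : (∫ s, V s * ∫ t in Ici s, W t) = ∫ t, W t * W t := by
    set g : ℝ → ℝ → ℝ := fun s t => V s * indicator (Ici s) (fun _ => (1:ℝ)) t * W t
      with hgdef
    have hgC1 : ∀ s, (∫ t, g s t) = V s * ∫ t in Ici s, W t := by
      intro s
      have heq : (fun t => g s t) = fun t => V s * (Ici s).indicator W t := by
        funext t
        by_cases h : t ∈ Ici s <;>
          simp [hgdef, indicator_of_mem, indicator_of_notMem, h]
      rw [heq, integral_const_mul, integral_indicator measurableSet_Ici]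
    have hgC2 : ∀ t, (∫ s, g s t) = W t * W t := by
      intro t
      have heq : (fun s => g s t) = fun s => (Iic t).indicator V s * W t := by
        funext s
        by_cases h : s ≤ t
        · simp [hgdef, indicator_of_mem, mem_Ici, mem_Iic, h]
        · simp [hgdef, indicator_of_notMem, mem_Ici, mem_Iic, h]
      rw [heq, integral_mul_const, integral_indicator measurableSet_Iic]
    have hS : MeasurableSet {p : ℝ × ℝ | p.1 ≤ p.2} :=
      measurableSet_le measurable_fst measurable_snd
    have hgu : Function.uncurry g = fun p : ℝ × ℝ =>
        V p.1 * indicator {p : ℝ × ℝ | p.1 ≤ p.2} (fun _ => (1:ℝ)) p * W p.2 := by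
      funext p
      by_cases h : p.1 ≤ p.2 <;>
        simp [Function.uncurry, hgdef, Set.indicator, Set.mem_Ici, h]
    have hgmeas : AEStronglyMeasurable (Function.uncurry g) (volume.prod volume) := by
      rw [hgu]
      exact (((hV.comp continuous_fst).aestronglyMeasurable.mul
        (measurable_const.indicator hS).aestronglyMeasurable).mul
        (hWcont.comp continuous_snd).aestronglyMeasurable)
    have hgint : Integrable (Function.uncurry g) (volume.prod volume) := by
      have hbox : MeasurableSet (Icc (-r) r ×ˢ Icc (-r) r) :=
        measurableSet_Icc.prod measurableSet_Icc
      have hbint : Integrable ((Icc (-r) r ×ˢ Icc (-r) r).indicator fun _ => C * C')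
          (volume.prod volume) := by
        rw [integrable_indicator_iff hbox]
        refine integrableOn_const ?_ enorm_ne_top
        rw [Measure.prod_prod, Real.volume_Icc]
        exact (ENNReal.mul_lt_top ENNReal.ofReal_lt_top ENNReal.ofReal_lt_top).ne
      apply hbint.mono' hgmeas
      apply ae_of_all
      rintro ⟨s, t⟩
      have hind : |indicator (Ici s) (fun _ => (1:ℝ)) t| ≤ 1 := by
        by_cases h : t ∈ Ici s <;> simp [h]
      have hC0 : 0 ≤ C := (abs_nonneg _).trans (hC 0)
      have hC'0 : 0 ≤ C' := (abs_nonneg _).trans (hC' 0)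
      by_cases hmem : (s, t) ∈ Icc (-r) r ×ˢ Icc (-r) r
      · rw [indicator_of_mem hmem]
        have h1 : ‖Function.uncurry g (s, t)‖
            = |V s| * |indicator (Ici s) (fun _ => (1:ℝ)) t| * |W t| := by
          simp [Function.uncurry, hgdef, abs_mul]
        rw [h1]
        have h2 : |V s| * |indicator (Ici s) (fun _ => (1:ℝ)) t| ≤ C :=
          (mul_le_mul (hC s) hind (abs_nonneg _) ((abs_nonneg _).trans (hC s))).trans
            (by rw [mul_one])
        exact mul_le_mul h2 (hC' t) (abs_nonneg _) hC0
      · rw [indicator_of_notMem hmem]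
        have hz : Function.uncurry g (s, t) = 0 := by
          simp only [Function.uncurry, hgdef]
          by_cases hs : s ∈ Icc (-r) r
          · have ht : t ∉ Icc (-r) r := fun ht => hmem (Set.mk_mem_prod hs ht)
            have hW0 : W t = 0 := by
              simp only [mem_Icc, not_and_or, not_le] at ht
              rcases ht with h | h
              · exact hWlow t h
              · exact hWhigh t h
            simp [hW0]
          · simp [hV0 s hs]
        rw [hz]
        simp
    calc (∫ s, V s * ∫ t in Ici s, W t) = ∫ s, ∫ t, g s t := by
          congr 1; funext s; exact (hgC1 s).symm
      _ = ∫ t, ∫ s, g s t := integral_integral_swap hgint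
      _ = ∫ t, W t * W t := by congr 1; funext t; exact hgC2 t
  -- integrability helpers
  have hmulL : ∀ (φ : ℝ → ℝ), Continuous φ → Integrable (fun y => φ y * V y) := by
    intro φ hφ
    exact (hφ.mul hV).integrable_of_hasCompactSupport (HasCompactSupport.mul_left hsupp)
  have hmulR : ∀ (φ : ℝ → ℝ), Continuous φ → Integrable (fun y => V y * φ y) := by
    intro φ hφ
    exact (hV.mul hφ).integrable_of_hasCompactSupport (HasCompactSupport.mul_right hsupp)
  have hyVi : Integrable (fun y => y * V y) := hmulL _ continuous_id
  set c : ℝ := ∫ y, y * V y with hcdef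
  -- inner integral computation
  have inner : ∀ x, (∫ y, V x * |x - y| * V y)
      = V x * -c + 2 * (V x * -(∫ t in Ici x, W t)) := by
    intro x
    have habs : (fun y => V x * |x - y| * V y)
        = fun y => V x * ((x - y) * V y) + 2 * (V x * (V y * max (y - x) 0)) := by
      funext y
      rcases le_total x y with h | h
      · rw [abs_of_nonpos (by linarith), max_eq_left (by linarith)]; ring
      · rw [abs_of_nonneg (by linarith), max_eq_right (by linarith)]; ring
    have int1 : Integrable (fun y => V x * ((x - y) * V y)) :=
      (hmulL _ (continuous_const.sub continuous_id)).const_mul (V x)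
    have int2 : Integrable (fun y => 2 * (V x * (V y * max (y - x) 0))) :=
      (((hmulR _ (((continuous_id.sub continuous_const).max continuous_const))).const_mul
        (V x)).const_mul 2)
    rw [show (∫ y, V x * |x - y| * V y)
        = ∫ y, (V x * ((x - y) * V y) + 2 * (V x * (V y * max (y - x) 0))) from by rw [habs]]
    rw [integral_add int1 int2, integral_const_mul (V x), integral_const_mul 2,
      integral_const_mul (V x)]
    have hlin : (∫ y, (x - y) * V y) = -c := by
      have h2 : (fun y => (x - y) * V y) = fun y => x * V y - y * V y := by funext y; ring
      rw [h2, integral_sub (hVi.const_mul x) hyVi, integral_const_mul, hmean, mul_zero, zero_sub]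
    rw [hlin, stepB x, integral_neg]
  -- continuity of s ↦ ∫_{Ici s} W
  have hQeq : (fun s => ∫ t in Ici s, W t) = fun s => (∫ t, W t) - ∫ t in Iic s, W t := by
    funext s
    have h1 : (∫ t in Iio s, W t) + (∫ t in Ici s, W t) = ∫ t, W t :=
      intervalIntegral.integral_Iio_add_Ici hWi.integrableOn hWi.integrableOn
    have h2 : (∫ t in Iio s, W t) = ∫ t in Iic s, W t :=
      (integral_Iic_eq_integral_Iio).symm
    linarith
  have hQcont : Continuous fun s => ∫ t in Ici s, W t := by
    rw [hQeq]
    apply continuous_const.sub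
    have hW2eq : ∀ s, (∫ t in Iic s, W t) = ∫ t in (-r-1)..s, W t := by
      intro s
      have h0 : (∫ t in Iic (-r-1), W t) = 0 := by
        apply setIntegral_eq_zero_of_forall_eq_zero
        intro t ht
        exact hWlow t (by have h : t ≤ -r-1 := ht; linarith)
      have h := intervalIntegral.integral_Iic_sub_Iic (hWi.integrableOn (s := Iic (-r-1)))
        (hWi.integrableOn (s := Iic s))
      rw [h0, sub_zero] at h
      exact h
    rw [funext hW2eq]
    exact hWi.continuous_primitive _
  have intVQ : Integrable (fun s => V s * -(∫ t in Ici s, W t)) :=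
    hmulR _ hQcont.neg
  -- assemble
  have key : (∫ x, ∫ y, V x * |x - y| * V y) = -2 * ∫ t, W t * W t := by
    calc (∫ x, ∫ y, V x * |x - y| * V y)
        = ∫ x, (V x * -c + 2 * (V x * -(∫ t in Ici x, W t))) := by
          congr 1; funext x; exact inner x
      _ = (∫ x, V x * -c) + ∫ x, 2 * (V x * -(∫ t in Ici x, W t)) :=
          integral_add (hVi.mul_const _) (intVQ.const_mul 2)
      _ = (∫ x, V x) * -c + 2 * ∫ x, V x * -(∫ t in Ici x, W t) := by
          rw [integral_mul_const, integral_const_mul]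
      _ = 2 * -(∫ x, V x * ∫ t in Ici x, W t) := by
          rw [hmean, zero_mul, zero_add]
          congr 1
          rw [show (fun x => V x * -(∫ t in Ici x, W t))
              = fun x => -(V x * ∫ t in Ici x, W t) from by funext x; ring]
          rw [integral_neg]
      _ = -2 * ∫ t, W t * W t := by rw [stepC]; ring
  have hWW : (fun t => W t * W t) = fun x => (∫ y in Iic x, V y) ^ 2 := by
    funext t
    simp only [hWdef, pow_two]
  rw [key, hWW]
end

section
/- If V : ℝ → ℝ is continuous with compact support, not identically zero, and ∫_ℝ V dx = 0, then ∬_{ℝ²} V(x)|x−y|V(y) dx dy < 0. -/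
open MeasureTheory Set

noncomputable def chi (t x : ℝ) : ℝ := if t < x then 1 else 0

lemma chi_eq_indicator (x y t : ℝ) :
    (chi t x - chi t y)^2 = indicator (Ico (min x y) (max x y)) (fun _ => (1:ℝ)) t := by
  unfold chi
  rw [indicator]
  rcases lt_or_ge t x with h1 | h1 <;> rcases lt_or_ge t y with h2 | h2
  · rw [if_pos h1, if_pos h2, if_neg]
    · ring
    · simp only [mem_Ico]; intro h; exact absurd h.1 (not_le.mpr (lt_min h1 h2))
  · rw [if_pos h1, if_neg (not_lt.mpr h2), if_pos ⟨le_trans (min_le_right _ _) h2,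
      lt_of_lt_of_le h1 (le_max_left _ _)⟩]
    ring
  · rw [if_neg (not_lt.mpr h1), if_pos h2, if_pos ⟨le_trans (min_le_left _ _) h1,
      lt_of_lt_of_le h2 (le_max_right _ _)⟩]
    ring
  · rw [if_neg (not_lt.mpr h1), if_neg (not_lt.mpr h2), if_neg]
    · ring
    · simp only [mem_Ico]; intro h; exact absurd h.2 (not_lt.mpr (max_le h1 h2))

lemma integral_chi_sq (x y : ℝ) : ∫ t, (chi t x - chi t y)^2 = |x - y| := by
  have h : (fun t => (chi t x - chi t y)^2)
      = indicator (Ico (min x y) (max x y)) (fun _ => (1:ℝ)) := funext (chi_eq_indicator x y)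
  rw [h]
  have h1 : (fun _ : ℝ => (1:ℝ)) = (1 : ℝ → ℝ) := rfl
  rw [h1, integral_indicator_one measurableSet_Ico, measureReal_def, Real.volume_Ico,
    ENNReal.toReal_ofReal (by simp [min_le_max] : (0:ℝ) ≤ max x y - min x y)]
  exact max_sub_min_eq_abs' x y

lemma chi_meas_right (x : ℝ) : Measurable (fun t => chi t x) := by
  unfold chi
  exact Measurable.ite (measurableSet_Iio) measurable_const measurable_const

lemma chi_nonneg (t x : ℝ) : 0 ≤ chi t x := by unfold chi; split <;> norm_num

/-- For continuous, compactly supported, nontrivial `V` of zero mean,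
`∬ V(x)|x - y|V(y) dx dy < 0`. -/
theorem double_integral_abs_neg (V : ℝ → ℝ)
    (hV : Continuous V) (hsupp : HasCompactSupport V)
    (hne : V ≠ 0) (hmean : (∫ x : ℝ, V x) = 0) :
    (∫ x : ℝ, ∫ y : ℝ, V x * |x - y| * V y) < 0 := by
  -- support bound
  obtain ⟨R, hR0, hRsupp⟩ : ∃ R, 0 < R ∧ tsupport V ⊆ Icc (-R) R := by
    obtain ⟨r, hr⟩ := hsupp.isBounded.subset_closedBall 0
    refine ⟨max r 1, by positivity, fun x hx => ?_⟩
    have h := hr hx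
    rw [Real.closedBall_eq_Icc, zero_sub, zero_add] at h
    exact ⟨le_trans (neg_le_neg (le_max_left r 1)) h.1, h.2.trans (le_max_left _ _)⟩
  have hVz : ∀ x : ℝ, x ∉ Icc (-R) R → V x = 0 := fun x hx =>
    image_eq_zero_of_notMem_tsupport (fun h => hx (hRsupp h))
  have hVint : Integrable V := hV.integrable_of_hasCompactSupport hsupp
  set W : ℝ → ℝ := fun t => ∫ x in Ioi t, V x with hWdef
  -- V y * chi t y is the indicator of Ioi t applied to V
  have hVchi_eq : ∀ t : ℝ, (fun y => V y * chi t y) = (Ioi t).indicator V := by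
    intro t; funext y
    unfold chi
    by_cases h : t < y <;> simp [indicator, mem_Ioi, h]
  have hVchi_int : ∀ t : ℝ, Integrable (fun y => V y * chi t y) := by
    intro t; rw [hVchi_eq t]; exact hVint.indicator measurableSet_Ioi
  have hVchi_integral : ∀ t : ℝ, ∫ y, V y * chi t y = W t := by
    intro t; rw [hVchi_eq t, integral_indicator measurableSet_Ioi]
  -- W vanishes outside [-R, R]
  have hWR : ∀ t : ℝ, R ≤ t → W t = 0 := by
    intro t ht
    refine setIntegral_eq_zero_of_forall_eq_zero fun x hx => hVz x ?_
    rw [mem_Ioi] at hx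
    exact fun hmem => absurd hmem.2 (by linarith)
  have hWL : ∀ t : ℝ, t < -R → W t = 0 := by
    intro t ht
    have hIic : ∫ x in Iic t, V x = 0 :=
      setIntegral_eq_zero_of_forall_eq_zero fun x hx => hVz x
        (fun hmem => absurd hmem.1 (by rw [mem_Iic] at hx; linarith))
    have := intervalIntegral.integral_Iic_add_Ioi (b := t) hVint.integrableOn hVint.integrableOn
    rw [hmean, hIic, zero_add] at this
    exact this
  -- W is continuous
  have hWiv : ∀ t : ℝ, W t = ∫ x in t..(R+1), V x := by
    intro t
    rcases le_or_gt t (R+1) with h | h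
    · have hsplit : Ioc t (R+1) ∪ Ioi (R+1) = Ioi t := Ioc_union_Ioi_eq_Ioi h
      have h2 : ∫ x in Ioi (R+1), V x = 0 :=
        setIntegral_eq_zero_of_forall_eq_zero fun x hx => hVz x
          (fun hmem => absurd hmem.2 (by rw [mem_Ioi] at hx; linarith))
      rw [hWdef]
      simp only
      rw [← hsplit, setIntegral_union (Ioc_disjoint_Ioi le_rfl) measurableSet_Ioi
        hVint.integrableOn hVint.integrableOn, h2, add_zero,
        intervalIntegral.integral_of_le h]
    · have h1 : W t = 0 := hWR t (by linarith)
      have h2 : ∫ x in (R+1)..t, V x = 0 := by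
        rw [intervalIntegral.integral_of_le h.le]
        exact setIntegral_eq_zero_of_forall_eq_zero fun x hx => hVz x
          (fun hmem => absurd hmem.2 (by rcases hx with ⟨hx1, hx2⟩; linarith))
      rw [h1, intervalIntegral.integral_symm, h2, neg_zero]
  have hWcont : Continuous W := by
    have : Continuous fun t => ∫ x in (R+1)..t, V x :=
      intervalIntegral.continuous_primitive (fun _ _ => hVint.intervalIntegrable) (R+1)
    have heq : W = fun t => -∫ x in (R+1)..t, V x := by
      funext t; rw [hWiv t, intervalIntegral.integral_symm]
    rw [heq]; exact this.neg
  -- W has compact support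
  have hWsupp : HasCompactSupport W := by
    apply HasCompactSupport.intro (isCompact_Icc (a := -(R+1)) (b := R+1))
    intro t ht
    simp only [mem_Icc, not_and_or, not_le] at ht
    rcases ht with h | h
    · exact hWL t (by linarith)
    · exact hWR t (by linarith)
  -- W is not identically zero
  have hWne : ∃ t₀, W t₀ ≠ 0 := by
    by_contra h
    push_neg at h
    apply hne
    funext x
    have hd : HasDerivAt (fun u => ∫ s in (R+1)..u, V s) (V x) x :=
      intervalIntegral.integral_hasDerivAt_right hVint.intervalIntegrable
        hVint.aestronglyMeasurable.stronglyMeasurableAtFilter hV.continuousAt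
    have hzero : (fun u => ∫ s in (R+1)..u, V s) = fun _ => (0:ℝ) := by
      funext u
      have := hWiv u
      rw [h u] at this
      rw [intervalIntegral.integral_symm, ← this, neg_zero]
    rw [hzero] at hd
    have : V x = 0 := hd.unique (hasDerivAt_const x 0)
    simp [this]
  -- bound on W
  obtain ⟨M, hM⟩ : ∃ M, ∀ t, ‖W t‖ ≤ M := hWsupp.exists_bound_of_continuous hWcont
  have hM0 : 0 ≤ M := le_trans (norm_nonneg _) (hM 0)
  -- ∫ x, V x * (1 - 2 * chi t x) = -2 * W t
  have hkey : ∀ t : ℝ, ∫ x, V x * (1 - 2 * chi t x) = -2 * W t := by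
    intro t
    have : (fun x => V x * (1 - 2 * chi t x)) = fun x => V x - 2 * (V x * chi t x) := by
      funext x; ring
    rw [this, integral_sub hVint (((hVchi_int t)).const_mul 2), integral_const_mul,
      hVchi_integral t, hmean]
    ring
  -- Step 1: inner integral transformation
  have step1 : ∀ x : ℝ, (∫ y, V x * |x - y| * V y)
      = ∫ t, (V x * (1 - 2 * chi t x)) * W t := by
    intro x
    have e1 : ∀ y : ℝ, V x * |x - y| * V y = ∫ t, V x * V y * (chi t x - chi t y)^2 := by
      intro y
      rw [integral_const_mul, integral_chi_sq x y]
      ring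
    rw [show (fun y => V x * |x - y| * V y) = fun y => ∫ t, V x * V y * (chi t x - chi t y)^2
      from funext e1]
    -- Fubini swap
    have hint : Integrable (Function.uncurry fun y t => V x * V y * (chi t x - chi t y)^2)
        (volume.prod volume) := by
      have hmeas : AEStronglyMeasurable
          (Function.uncurry fun y t => V x * V y * (chi t x - chi t y)^2)
          (volume.prod volume) := by
        apply Measurable.aestronglyMeasurable
        rw [Function.uncurry_def]
        apply Measurable.mul
        · exact measurable_const.mul (hV.measurable.comp measurable_fst)
        · apply Measurable.pow _ measurable_const
          apply Measurable.sub
          · exact (chi_meas_right x).comp measurable_snd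
          · unfold chi
            exact Measurable.ite (measurableSet_lt measurable_snd measurable_fst)
              measurable_const measurable_const
      set A := min x (-(R+1)) with hA
      set B := max x (R+1) with hB
      have hdom : Integrable (fun p : ℝ×ℝ =>
          (|V x| * |V p.1|) * indicator (Icc A B) (fun _ => (1:ℝ)) p.2) (volume.prod volume) := by
        apply Integrable.mul_prod (hVint.abs.const_mul _)
        exact (integrable_indicator_iff measurableSet_Icc).mpr
          (integrableOn_const measure_Icc_lt_top.ne)
      apply hdom.mono' hmeas
      refine Filter.Eventually.of_forall fun p => ?_
      obtain ⟨y, t⟩ := p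
      simp only [Function.uncurry]
      by_cases hy : V y = 0
      · simp [hy]
      · have hyR : y ∈ Icc (-R) R := hRsupp (subset_tsupport V hy)
        have hsub : Ico (min x y) (max x y) ⊆ Icc A B := by
          intro s hs
          refine ⟨le_trans (le_min (min_le_left _ _)
            (le_trans (min_le_right _ _) (by linarith [hyR.1]))) hs.1, le_trans hs.2.le ?_⟩
          exact max_le_max le_rfl (by linarith [hyR.2])
        calc ‖V x * V y * (chi t x - chi t y)^2‖
            = |V x| * |V y| * (chi t x - chi t y)^2 := by
              rw [Real.norm_eq_abs, abs_mul, abs_mul, abs_of_nonneg (sq_nonneg (chi t x - chi t y))]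
          _ ≤ |V x| * |V y| * indicator (Icc A B) (fun _ => (1:ℝ)) t := by
              apply mul_le_mul_of_nonneg_left _ (by positivity)
              rw [chi_eq_indicator]
              exact indicator_le_indicator_of_subset hsub (fun _ => zero_le_one) t
          _ = (|V x| * |V y|) * indicator (Icc A B) (fun _ => (1:ℝ)) t := by ring
    rw [integral_integral_swap hint]
    -- compute inner integral in y
    congr 1
    funext t
    have expand : ∀ y : ℝ, V x * V y * (chi t x - chi t y)^2
        = (V x * (chi t x)^2) * V y + (V x * (1 - 2 * chi t x)) * (V y * chi t y) := by
      intro y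
      have hc : chi t y * chi t y = chi t y := by unfold chi; split <;> norm_num
      linear_combination (V x * V y) * hc
    rw [show (fun y => V x * V y * (chi t x - chi t y)^2) = fun y =>
        (V x * (chi t x)^2) * V y + (V x * (1 - 2 * chi t x)) * (V y * chi t y)
      from funext expand]
    rw [integral_add (hVint.const_mul _) ((hVchi_int t).const_mul _), integral_const_mul,
      integral_const_mul, hmean, hVchi_integral t, mul_zero, zero_add]
  -- rewrite the double integral
  rw [show (fun x => ∫ y, V x * |x - y| * V y)
      = fun x => ∫ t, (V x * (1 - 2 * chi t x)) * W t from funext step1]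
  have chi_le_one : ∀ t x : ℝ, chi t x ≤ 1 := by
    intro t x; unfold chi; split <;> norm_num
  have hint2 : Integrable (Function.uncurry fun x t => (V x * (1 - 2 * chi t x)) * W t)
      (volume.prod volume) := by
    have hmeas : AEStronglyMeasurable
        (Function.uncurry fun x t => (V x * (1 - 2 * chi t x)) * W t)
        (volume.prod volume) := by
      apply Measurable.aestronglyMeasurable
      rw [Function.uncurry_def]
      apply Measurable.mul
      · apply (hV.measurable.comp measurable_fst).mul
        apply measurable_const.sub
        apply measurable_const.mul
        unfold chi
        exact Measurable.ite (measurableSet_lt measurable_snd measurable_fst)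
          measurable_const measurable_const
      · exact hWcont.measurable.comp measurable_snd
    have hdom : Integrable (fun p : ℝ×ℝ =>
        (3 * M * |V p.1|) * indicator (Icc (-(R+1)) (R+1)) (fun _ => (1:ℝ)) p.2)
        (volume.prod volume) := by
      apply Integrable.mul_prod (hVint.abs.const_mul _)
      exact (integrable_indicator_iff measurableSet_Icc).mpr
        (integrableOn_const measure_Icc_lt_top.ne)
    apply hdom.mono' hmeas
    refine Filter.Eventually.of_forall fun p => ?_
    obtain ⟨x, t⟩ := p
    simp only [Function.uncurry]
    by_cases ht : t ∈ Icc (-(R+1)) (R+1)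
    · rw [indicator_of_mem ht, mul_one, Real.norm_eq_abs, abs_mul, abs_mul]
      have h1 : |1 - 2 * chi t x| ≤ 3 := by
        rw [abs_le]; constructor <;> nlinarith [chi_nonneg t x, chi_le_one t x]
      have h2 : |W t| ≤ M := by rw [← Real.norm_eq_abs]; exact hM t
      calc |V x| * |1 - 2 * chi t x| * |W t| ≤ |V x| * 3 * M := by
            apply mul_le_mul (mul_le_mul_of_nonneg_left h1 (abs_nonneg _)) h2
              (abs_nonneg _) (by positivity)
        _ = 3 * M * |V x| := by ring
    · have hWt : W t = 0 := by
        simp only [mem_Icc, not_and_or, not_le] at ht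
        rcases ht with h | h
        · exact hWL t (by linarith)
        · exact hWR t (by linarith)
      rw [indicator_of_notMem ht, hWt, mul_zero, mul_zero, norm_zero]
  rw [integral_integral_swap hint2]
  have hstep2 : (fun t => ∫ x, (V x * (1 - 2 * chi t x)) * W t)
      = fun t => (-2 : ℝ) * (W t * W t) := by
    funext t
    rw [integral_mul_const, hkey t]
    ring
  rw [hstep2, integral_const_mul]
  -- positivity of ∫ W²
  have hWWint : Integrable (fun t => W t * W t) := by
    apply (hWcont.mul hWcont).integrable_of_hasCompactSupport
    exact hWsupp.mul_right
  have hpos : 0 < ∫ t, W t * W t := by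
    rw [integral_pos_iff_support_of_nonneg (fun t => mul_self_nonneg (W t)) hWWint]
    obtain ⟨t₀, ht₀⟩ := hWne
    have hopen : IsOpen {t : ℝ | W t ≠ 0} := isOpen_compl_singleton.preimage hWcont
    have h1 : 0 < volume {t : ℝ | W t ≠ 0} := hopen.measure_pos volume ⟨t₀, ht₀⟩
    exact lt_of_lt_of_le h1 (measure_mono fun t ht => mul_self_ne_zero.mpr ht)
  nlinarith [hpos]
end
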